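/- Let P be an N×N stochastic matrix with strictly positive entries, and for a vector v ∈ ℝᴺ define osc(v) = max_i v_i − min_i v_i. Then osc(P v) ≤ (1 − Nδ)·osc(v), where δ = min_{i,j} P i j. -/
import Mathlib


theorem osc_contraction (N : ℕ) (hN : 0 < N) (P : Matrix (Fin N) (Fin N) ℝ)
    (hpos : ∀ i j, 0 < P i j) (hrow : ∀ i, ∑ j, P i j = 1)
    (δ : ℝ) (hδ : IsLeast (Set.range fun p : Fin N × Fin N => P p.1 p.2) δ)
    (v : Fin N → ℝ) :
    (⨆ i, ∑ j, P i j * v j) - (⨅ i, ∑ j, P i j * v j) ≤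
      (1 - (N : ℝ) * δ) * ((⨆ i, v i) - (⨅ i, v i)) := by
  haveI : Nonempty (Fin N) := Fin.pos_iff_nonempty.mp hN
  set M := ⨆ i, v i with hM
  set m := ⨅ i, v i with hm
  have hbdd : BddAbove (Set.range v) := Set.Finite.bddAbove (Set.finite_range v)
  have hbdd' : BddBelow (Set.range v) := Set.Finite.bddBelow (Set.finite_range v)
  have hvM : ∀ j, v j ≤ M := fun j => le_ciSup hbdd j
  have hmv : ∀ j, m ≤ v j := fun j => ciInf_le hbdd' j
  have hMm : 0 ≤ M - m := by
    obtain ⟨j⟩ := ‹Nonempty (Fin N)›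
    linarith [hvM j, hmv j]
  have hδle : ∀ i j, δ ≤ P i j := fun i j => hδ.2 ⟨(i, j), rfl⟩
  have key : ∀ i k, (∑ j, P i j * v j) - (∑ j, P k j * v j) ≤ (1 - (N : ℝ) * δ) * (M - m) := by
    intro i k
    set c : Fin N → ℝ := fun j => min (P i j) (P k j) with hc
    have hδc : ∀ j, δ ≤ c j := fun j => le_min (hδle i j) (hδle k j)
    have hsum : (N : ℝ) * δ ≤ ∑ j, c j := by
      calc (N : ℝ) * δ = ∑ _j : Fin N, δ := by simp [mul_comm]
        _ ≤ ∑ j, c j := Finset.sum_le_sum fun j _ => hδc j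
    have hA : ∑ j, (P i j - c j) * v j ≤ (1 - ∑ j, c j) * M := by
      have : ∑ j, (P i j - c j) * v j ≤ ∑ j, (P i j - c j) * M :=
        Finset.sum_le_sum fun j _ =>
          mul_le_mul_of_nonneg_left (hvM j) (by simp [hc, sub_nonneg, min_le_left])
      calc ∑ j, (P i j - c j) * v j ≤ ∑ j, (P i j - c j) * M := this
        _ = (∑ j, (P i j - c j)) * M := by rw [Finset.sum_mul]
        _ = (1 - ∑ j, c j) * M := by rw [Finset.sum_sub_distrib, hrow i]
    have hB : (1 - ∑ j, c j) * m ≤ ∑ j, (P k j - c j) * v j := by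
      have : ∑ j, (P k j - c j) * m ≤ ∑ j, (P k j - c j) * v j :=
        Finset.sum_le_sum fun j _ =>
          mul_le_mul_of_nonneg_left (hmv j) (by simp [hc, sub_nonneg, min_le_right])
      calc (1 - ∑ j, c j) * m = (∑ j, (P k j - c j)) * m := by
            rw [Finset.sum_sub_distrib, hrow k]
        _ = ∑ j, (P k j - c j) * m := by rw [Finset.sum_mul]
        _ ≤ ∑ j, (P k j - c j) * v j := this
    have e1 : (∑ j, P i j * v j) - (∑ j, P k j * v j)
        = (∑ j, (P i j - c j) * v j) - (∑ j, (P k j - c j) * v j) := by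
      rw [← Finset.sum_sub_distrib, ← Finset.sum_sub_distrib]
      congr 1; ext j; ring
    have ht : (1 - ∑ j, c j) * (M - m) ≤ (1 - (N : ℝ) * δ) * (M - m) := by
      apply mul_le_mul_of_nonneg_right _ hMm
      linarith
    calc (∑ j, P i j * v j) - (∑ j, P k j * v j)
        = (∑ j, (P i j - c j) * v j) - (∑ j, (P k j - c j) * v j) := e1
      _ ≤ (1 - ∑ j, c j) * M - (1 - ∑ j, c j) * m := by linarith
      _ = (1 - ∑ j, c j) * (M - m) := by ring
      _ ≤ (1 - (N : ℝ) * δ) * (M - m) := ht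
  rw [sub_le_iff_le_add]
  apply ciSup_le
  intro i
  rw [← sub_le_iff_le_add']
  apply le_ciInf
  intro k
  linarith [key i k]
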